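/- Let K ∈ 𝔹^{n_u×n_y}, G ∈ 𝔹^{n_y×n_u}, n = min(n_u, n_y), m* = ⌈log₂ n⌉, and define Z_0 = K, Z_{m+1} = Z_m + Z_m G Z_m. Then Z_{m*} is the unique minimizer of the number of nonzero entries N(Z) over all Z ∈ 𝔹^{n_u×n_y} satisfying Z G Z ≤ Z and K ≤ Z; equivalently, Z_{m*} ≤ Z for every such Z, and Z_{m*} itself satisfies both constraints. -/

import Mathlib

/-- Boolean (OR/AND semiring) matrix multiplication. -/
noncomputable def bmul {a b c : ℕ} (X : Matrix (Fin a) (Fin b) Bool) (Y : Matrix (Fin b) (Fin c) Bool) :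
    Matrix (Fin a) (Fin c) Bool :=
  fun i k => Finset.univ.sup fun j => X i j && Y j k

/-- Entrywise Boolean (OR) addition of matrices. -/
def badd {a b : ℕ} (X Y : Matrix (Fin a) (Fin b) Bool) : Matrix (Fin a) (Fin b) Bool :=
  fun i j => X i j || Y i j

/-- The sequence Z_0 = K, Z_{m+1} = Z_m + Z_m G Z_m. -/
noncomputable def Zseq {nu ny : ℕ} (K : Matrix (Fin nu) (Fin ny) Bool) (G : Matrix (Fin ny) (Fin nu) Bool) :
    ℕ → Matrix (Fin nu) (Fin ny) Bool
  | 0 => K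
  | m + 1 => badd (Zseq K G m) (bmul (bmul (Zseq K G m) G) (Zseq K G m))

/-- kterm K G s = K (G K)^s in the Boolean semiring. -/
noncomputable def kterm {nu ny : ℕ} (K : Matrix (Fin nu) (Fin ny) Bool) (G : Matrix (Fin ny) (Fin nu) Bool) :
    ℕ → Matrix (Fin nu) (Fin ny) Bool
  | 0 => K
  | s + 1 => bmul (kterm K G s) (bmul G K)

/-- Boolean (OR) sum of the matrices f 0, ..., f (N-1). -/
noncomputable def bsum {a b : ℕ} (N : ℕ) (f : ℕ → Matrix (Fin a) (Fin b) Bool) :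
    Matrix (Fin a) (Fin b) Bool :=
  fun i j => (Finset.range N).sup fun s => f s i j

/-- Number of nonzero (true) entries. -/
def ncount {a b : ℕ} (Z : Matrix (Fin a) (Fin b) Bool) : ℕ :=
  ∑ i : Fin a, ∑ j : Fin b, if Z i j then 1 else 0

/- ## Auxiliary lemmas -/

lemma sup_true_iff {α : Type*} (s : Finset α) (f : α → Bool) :
    s.sup f = true ↔ ∃ a ∈ s, f a = true := by
  induction s using Finset.cons_induction with
  | empty => simp
  | cons a s ha ih =>
      simp [Finset.sup_cons, show ∀ x y : Bool, x ⊔ y = (x || y) from fun _ _ => rfl,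
        Bool.or_eq_true, ih]

lemma bool_le {x y : Bool} : x ≤ y ↔ (x = true → y = true) := by
  cases x <;> cases y <;> simp

lemma bmul_true_iff {a b c : ℕ} (X : Matrix (Fin a) (Fin b) Bool)
    (Y : Matrix (Fin b) (Fin c) Bool) (i : Fin a) (k : Fin c) :
    bmul X Y i k = true ↔ ∃ j, X i j = true ∧ Y j k = true := by
  simp [bmul, sup_true_iff]

lemma bool_ext {x y : Bool} (h : x = true ↔ y = true) : x = y := by
  cases x <;> cases y <;> simp_all

lemma bmul_assoc {a b c d : ℕ} (X : Matrix (Fin a) (Fin b) Bool)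
    (Y : Matrix (Fin b) (Fin c) Bool) (Z : Matrix (Fin c) (Fin d) Bool) :
    bmul (bmul X Y) Z = bmul X (bmul Y Z) := by
  funext i l
  apply bool_ext
  simp only [bmul_true_iff]
  constructor
  · rintro ⟨k, ⟨j, hx, hy⟩, hz⟩; exact ⟨j, hx, k, hy, hz⟩
  · rintro ⟨j, hx, k, hy, hz⟩; exact ⟨k, ⟨j, hx, hy⟩, hz⟩

lemma bmul_mono {a b c : ℕ} {X X' : Matrix (Fin a) (Fin b) Bool}
    {Y Y' : Matrix (Fin b) (Fin c) Bool}
    (hX : ∀ i j, X i j = true → X' i j = true)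
    (hY : ∀ j k, Y j k = true → Y' j k = true) :
    ∀ i k, bmul X Y i k = true → bmul X' Y' i k = true := by
  intro i k h
  obtain ⟨j, h1, h2⟩ := (bmul_true_iff _ _ _ _).mp h
  exact (bmul_true_iff _ _ _ _).mpr ⟨j, hX _ _ h1, hY _ _ h2⟩

section Main

variable {nu ny : ℕ} (K : Matrix (Fin nu) (Fin ny) Bool) (G : Matrix (Fin ny) (Fin nu) Bool)

/-- kterm (s+t+1) = (kterm s) G (kterm t) -/
lemma kterm_split (s t : ℕ) :
    kterm K G (s + t + 1) = bmul (bmul (kterm K G s) G) (kterm K G t) := by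
  induction t with
  | zero =>
      show bmul (kterm K G s) (bmul G K) = _
      rw [← bmul_assoc]
      rfl
  | succ t ih =>
      show bmul (kterm K G (s + t + 1)) (bmul G K) = _
      rw [ih, bmul_assoc]
      rfl

lemma K_le_Zseq (m : ℕ) : ∀ i j, K i j = true → Zseq K G m i j = true := by
  induction m with
  | zero => intro i j h; exact h
  | succ m ih =>
      intro i j h
      show badd _ _ i j = true
      simp [badd, ih i j h]

lemma Zseq_le_Zseq_succ (m : ℕ) : ∀ i j, Zseq K G m i j = true → Zseq K G (m+1) i j = true := by
  intro i j h; show badd _ _ i j = true; simp [badd, h]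

lemma kterm_le_Zseq (m : ℕ) : ∀ s < 2 ^ m, ∀ i j,
    kterm K G s i j = true → Zseq K G m i j = true := by
  induction m with
  | zero =>
      intro s hs i j h
      interval_cases s
      exact h
  | succ m ih =>
      intro s hs i j h
      by_cases hsm : s < 2 ^ m
      · exact Zseq_le_Zseq_succ K G m i j (ih s hsm i j h)
      · push_neg at hsm
        -- s = (2^m - 1) + (s - 2^m) + 1
        have h2 : 0 < 2 ^ m := Nat.pow_pos (by norm_num)
        have hseq : s = (2 ^ m - 1) + (s - 2 ^ m) + 1 := by omega
        rw [hseq, kterm_split] at h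
        have hb : s - 2 ^ m < 2 ^ m := by
          have : 2 ^ (m + 1) = 2 ^ m + 2 ^ m := by ring
          omega
        obtain ⟨k, h1, h2'⟩ := (bmul_true_iff _ _ _ _).mp h
        obtain ⟨y, hy1, hy2⟩ := (bmul_true_iff _ _ _ _).mp h1
        have za : Zseq K G m i y = true := ih _ (by omega) _ _ hy1
        have zb : Zseq K G m k j = true := ih _ hb _ _ h2'
        show badd _ _ i j = true
        simp only [badd, Bool.or_eq_true]
        right
        exact (bmul_true_iff _ _ _ _).mpr ⟨k, (bmul_true_iff _ _ _ _).mpr ⟨y, za, hy2⟩, zb⟩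

lemma Zseq_le_ksum (m : ℕ) : ∀ i j, Zseq K G m i j = true →
    ∃ s < 2 ^ m, kterm K G s i j = true := by
  induction m with
  | zero => intro i j h; exact ⟨0, by norm_num, h⟩
  | succ m ih =>
      intro i j h
      simp only [Zseq, badd, Bool.or_eq_true] at h
      have hlt : 2 ^ m < 2 ^ (m + 1) := by
        have : 2 ^ (m + 1) = 2 ^ m + 2 ^ m := by ring
        have := (Nat.pow_pos (show 0 < 2 by norm_num) : 0 < 2 ^ m)
        omega
      rcases h with h | h
      · obtain ⟨s, hs, hk⟩ := ih i j h
        exact ⟨s, by omega, hk⟩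
      · obtain ⟨k, h1, h2⟩ := (bmul_true_iff _ _ _ _).mp h
        obtain ⟨y, hy1, hy2⟩ := (bmul_true_iff _ _ _ _).mp h1
        obtain ⟨s, hs, hks⟩ := ih i y hy1
        obtain ⟨t, ht, hkt⟩ := ih k j h2
        refine ⟨s + t + 1, by omega, ?_⟩
        rw [kterm_split]
        exact (bmul_true_iff _ _ _ _).mpr ⟨k, (bmul_true_iff _ _ _ _).mpr ⟨y, hks, hy2⟩, hkt⟩

/-- Path characterization of kterm. -/
def IsPath (s : ℕ) (i : Fin nu) (j : Fin ny) (u : ℕ → Fin nu) (y : ℕ → Fin ny) : Prop :=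
  u 0 = i ∧ y s = j ∧ (∀ r ≤ s, K (u r) (y r) = true) ∧ (∀ r < s, G (y r) (u (r + 1)) = true)

lemma kterm_iff_path (s : ℕ) (i : Fin nu) (j : Fin ny) :
    kterm K G s i j = true ↔ ∃ u y, IsPath K G s i j u y := by
  induction s generalizing j with
  | zero =>
      constructor
      · intro h
        exact ⟨fun _ => i, fun _ => j, rfl, rfl, fun r hr => by
          interval_cases r; exact h, fun r hr => by omega⟩
      · rintro ⟨u, y, hu, hy, hK, -⟩
        have := hK 0 le_rfl
        rwa [hu, hy] at this
  | succ s ih =>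
      constructor
      · intro h
        obtain ⟨y', h1, h2⟩ := (bmul_true_iff _ _ _ _).mp h
        obtain ⟨u', hG, hK'⟩ := (bmul_true_iff _ _ _ _).mp h2
        obtain ⟨u, y, hu, hy, hK, hGp⟩ := (ih y').mp h1
        refine ⟨fun r => if r ≤ s then u r else u', fun r => if r ≤ s then y r else j,
          ?_, ?_, ?_, ?_⟩
        · simp [Nat.zero_le]; exact hu
        · simp
        · intro r hr
          by_cases hrs : r ≤ s
          · simp [hrs]; exact hK r hrs
          · have : r = s + 1 := by omega
            simp [hrs]; exact hK'
        · intro r hr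
          by_cases hrs : r < s
          · simp [Nat.le_of_lt hrs, Nat.succ_le_of_lt hrs]
            exact hGp r hrs
          · have : r = s := by omega
            subst this
            simp [Nat.lt_irrefl]
            rw [hy]; exact hG
      · rintro ⟨u, y, hu, hy, hK, hG⟩
        have h1 : kterm K G s i (y s) = true :=
          (ih (y s)).mpr ⟨u, y, hu, rfl, fun r hr => hK r (by omega), fun r hr => hG r (by omega)⟩
        show bmul _ _ _ _ = true
        refine (bmul_true_iff _ _ _ _).mpr ⟨y s, h1, ?_⟩
        refine (bmul_true_iff _ _ _ _).mpr ⟨u (s + 1), hG s (by omega), ?_⟩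
        rw [← hy]; exact hK (s + 1) le_rfl

lemma path_shorten {s : ℕ} {i : Fin nu} {j : Fin ny} (hs : min nu ny ≤ s)
    (h : ∃ u y, IsPath K G s i j u y) :
    ∃ s' < s, ∃ u y, IsPath K G s' i j u y := by
  obtain ⟨u, y, hu, hy, hK, hG⟩ := h
  rcases le_total nu ny with hmin | hmin
  · -- pigeonhole on u 0, ..., u s  (nu ≤ s)
    have hnus : nu ≤ s := by omega
    obtain ⟨a', b', hne, heq⟩ := Fintype.exists_ne_map_eq_of_card_lt
      (fun r : Fin (s + 1) => u r) (by simpa using by omega)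
    -- wlog a < b
    obtain ⟨a, b, hab, habs, huab⟩ :
        ∃ a b : ℕ, a < b ∧ b ≤ s ∧ u a = u b := by
      rcases lt_or_gt_of_ne (Fin.val_ne_of_ne hne) with hlt | hlt
      · exact ⟨a', b', hlt, by omega, heq⟩
      · exact ⟨b', a', hlt, by omega, heq.symm⟩
    set d := b - a with hd
    have hd0 : 0 < d := by omega
    refine ⟨s - d, by omega, fun r => if r ≤ a then u r else u (r + d),
      fun r => if r < a then y r else y (r + d), ?_, ?_, ?_, ?_⟩
    · simp [Nat.zero_le]; exact hu
    · have hsda : a ≤ s - d := by omega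
      by_cases hc : s - d < a
      · omega
      · simp [hc]
        have : s - d + d = s := by omega
        rw [this]; exact hy
    · intro r hr
      by_cases h1 : r < a
      · simp [Nat.le_of_lt h1, h1]; exact hK r (by omega)
      · by_cases h2 : r ≤ a
        · have hra : r = a := by omega
          subst hra
          simp [le_refl, Nat.lt_irrefl]
          have : r + d = b := by omega
          rw [this, huab]
          exact hK b (by omega)
        · simp [h2, show ¬ r < a by omega]
          exact hK (r + d) (by omega)
    · intro r hr
      by_cases h1 : r < a
      · simp [h1, Nat.le_of_lt h1, Nat.succ_le_of_lt h1]
        exact hG r (by omega)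
      · simp [h1, show ¬ r + 1 ≤ a by omega, show r + 1 + d = r + d + 1 by omega]
        exact hG (r + d) (by omega)
  · -- pigeonhole on y 0, ..., y s  (ny ≤ s)
    have hnys : ny ≤ s := by omega
    obtain ⟨a', b', hne, heq⟩ := Fintype.exists_ne_map_eq_of_card_lt
      (fun r : Fin (s + 1) => y r) (by simpa using by omega)
    obtain ⟨a, b, hab, habs, hyab⟩ :
        ∃ a b : ℕ, a < b ∧ b ≤ s ∧ y a = y b := by
      rcases lt_or_gt_of_ne (Fin.val_ne_of_ne hne) with hlt | hlt
      · exact ⟨a', b', hlt, by omega, heq⟩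
      · exact ⟨b', a', hlt, by omega, heq.symm⟩
    set d := b - a with hd
    have hd0 : 0 < d := by omega
    refine ⟨s - d, by omega, fun r => if r ≤ a then u r else u (r + d),
      fun r => if r ≤ a then y r else y (r + d), ?_, ?_, ?_, ?_⟩
    · simp [Nat.zero_le]; exact hu
    · by_cases hc : s - d ≤ a
      · have hsa : s - d = a := by omega
        have hbs : b = s := by omega
        simp [hc, hsa, hyab, hbs, hy]
      · simp [hc]
        have : s - d + d = s := by omega
        rw [this]; exact hy
    · intro r hr
      by_cases h1 : r ≤ a
      · simp [h1]; exact hK r (by omega)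
      · simp [h1]; exact hK (r + d) (by omega)
    · intro r hr
      by_cases h1 : r < a
      · simp [Nat.le_of_lt h1, Nat.succ_le_of_lt h1]
        exact hG r (by omega)
      · by_cases h2 : r ≤ a
        · have hra : r = a := by omega
          subst hra
          simp [le_refl, show ¬ r + 1 ≤ r by omega, hyab,
            show r + 1 + d = b + 1 by omega]
          exact hG b (by omega)
        · simp [h2, show ¬ r + 1 ≤ a by omega, show r + 1 + d = r + d + 1 by omega]
          exact hG (r + d) (by omega)

lemma kterm_reduce : ∀ s (i : Fin nu) (j : Fin ny), kterm K G s i j = true →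
    ∃ s' < min nu ny, kterm K G s' i j = true := by
  intro s
  induction s using Nat.strong_induction_on with
  | _ s ih =>
      intro i j h
      by_cases hs : s < min nu ny
      · exact ⟨s, hs, h⟩
      · push_neg at hs
        obtain ⟨s', hs', hp⟩ := path_shorten K G hs ((kterm_iff_path K G s i j).mp h)
        exact ih s' hs' i j ((kterm_iff_path K G s' i j).mpr hp)

lemma Zseq_min (Z : Matrix (Fin nu) (Fin ny) Bool)
    (h1 : ∀ i j, bmul (bmul Z G) Z i j ≤ Z i j) (h2 : ∀ i j, K i j ≤ Z i j) :
    ∀ m i j, Zseq K G m i j = true → Z i j = true := by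
  intro m
  induction m with
  | zero => intro i j h; exact bool_le.mp (h2 i j) h
  | succ m ih =>
      intro i j h
      simp only [Zseq, badd, Bool.or_eq_true] at h
      rcases h with h | h
      · exact ih i j h
      · refine bool_le.mp (h1 i j) ?_
        exact bmul_mono (bmul_mono ih (fun _ _ h => h)) ih i j h

end Main

theorem stmt7 {nu ny : ℕ} (K : Matrix (Fin nu) (Fin ny) Bool)
    (G : Matrix (Fin ny) (Fin nu) Bool) (hn : 1 ≤ min nu ny) :
    (∀ i j, bmul (bmul (Zseq K G (Nat.clog 2 (min nu ny))) G)
        (Zseq K G (Nat.clog 2 (min nu ny))) i j ≤ Zseq K G (Nat.clog 2 (min nu ny)) i j) ∧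
    (∀ i j, K i j ≤ Zseq K G (Nat.clog 2 (min nu ny)) i j) ∧
    (∀ Z : Matrix (Fin nu) (Fin ny) Bool,
      (∀ i j, bmul (bmul Z G) Z i j ≤ Z i j) → (∀ i j, K i j ≤ Z i j) →
      (∀ i j, Zseq K G (Nat.clog 2 (min nu ny)) i j ≤ Z i j) ∧
      ncount (Zseq K G (Nat.clog 2 (min nu ny))) ≤ ncount Z ∧
      (ncount Z = ncount (Zseq K G (Nat.clog 2 (min nu ny))) →
        Z = Zseq K G (Nat.clog 2 (min nu ny)))) := by
  set n := min nu ny with hndef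
  set M := Nat.clog 2 n with hMdef
  have hnN : n ≤ 2 ^ M := Nat.le_pow_clog (by norm_num) n
  have hinv : ∀ i j, bmul (bmul (Zseq K G M) G) (Zseq K G M) i j ≤ Zseq K G M i j := by
    intro i j
    rw [bool_le]
    intro h
    obtain ⟨k, h1, h2⟩ := (bmul_true_iff _ _ _ _).mp h
    obtain ⟨y, hy1, hy2⟩ := (bmul_true_iff _ _ _ _).mp h1
    obtain ⟨s, hs, hks⟩ := Zseq_le_ksum K G M i y hy1
    obtain ⟨t, ht, hkt⟩ := Zseq_le_ksum K G M k j h2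
    have hst : kterm K G (s + t + 1) i j = true := by
      rw [kterm_split]
      exact (bmul_true_iff _ _ _ _).mpr ⟨k, (bmul_true_iff _ _ _ _).mpr ⟨y, hks, hy2⟩, hkt⟩
    obtain ⟨s', hs', hk'⟩ := kterm_reduce K G (s + t + 1) i j hst
    exact kterm_le_Zseq K G M s' (by omega) i j hk'
  refine ⟨hinv, fun i j => bool_le.mpr (K_le_Zseq K G M i j), ?_⟩
  intro Z hZ1 hZ2
  have hmin : ∀ i j, Zseq K G M i j = true → Z i j = true := Zseq_min K G Z hZ1 hZ2 M
  have hle : ∀ i j, Zseq K G M i j ≤ Z i j := fun i j => bool_le.mpr (hmin i j)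
  have hcount : ∀ (W V : Matrix (Fin nu) (Fin ny) Bool), (∀ i j, W i j ≤ V i j) →
      ncount W ≤ ncount V := by
    intro W V h
    refine Finset.sum_le_sum fun i _ => Finset.sum_le_sum fun j _ => ?_
    have h' := bool_le.mp (h i j)
    cases hW : W i j <;> cases hV : V i j <;> simp_all
  refine ⟨hle, hcount _ _ hle, ?_⟩
  intro hc
  by_contra hne
  have : ∃ i j, Zseq K G M i j ≠ Z i j := by
    by_contra hall
    push_neg at hall
    exact hne (funext fun i => funext fun j => (hall i j).symm)
  obtain ⟨i0, j0, hij⟩ := this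
  have hZij : Zseq K G M i0 j0 = false ∧ Z i0 j0 = true := by
    have h' := bool_le.mp (hle i0 j0)
    cases hW : Zseq K G M i0 j0 <;> cases hV : Z i0 j0 <;> simp_all
  have hlt : ncount (Zseq K G M) < ncount Z := by
    unfold ncount
    rw [← Finset.sum_product', ← Finset.sum_product']
    refine Finset.sum_lt_sum (fun p _ => ?_) ⟨(i0, j0), Finset.mem_univ _, ?_⟩
    · have h' := bool_le.mp (hle p.1 p.2)
      cases hW : Zseq K G M p.1 p.2 <;> cases hV : Z p.1 p.2 <;> simp_all
    · simp [hZij.1, hZij.2]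
  omega
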